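/- For every poset P and all positive integers m and n, the lattice Co(P) satisfies the identity (H_{m,n}) if and only if lh(P) ≤ m + n − 1. -/

import Mathlib

/-! Common definitions: lattices of order-convex subsets of a poset,
length of a poset, the identities (S), (U), (B), (L2), (H_n), (H_{m,n}),
join-irreducibility, the join-dependency relation, join-seeds,
the posets P_{I,J}, tree-like posets, D-closed sets,
and complete lattice congruences. -/

open Set

set_option maxHeartbeats 1000000

/-- The lattice `Co P` of all order-convex subsets of a poset `P`. -/
def Co (P : Type*) [PartialOrder P] : Type _ := {s : Set P // s.OrdConnected}

namespace Co

variable {P : Type*} [PartialOrder P]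

instance : PartialOrder (Co P) := Subtype.partialOrder _

instance : InfSet (Co P) :=
  ⟨fun S => ⟨⋂ s ∈ S, s.1, Set.ordConnected_biInter fun s _ => s.2⟩⟩

noncomputable instance : CompleteLattice (Co P) :=
  completeLatticeOfInf (Co P) (by
    intro S
    constructor
    · intro t ht
      exact Set.biInter_subset_of_mem (t := fun s => s.1) ht
    · intro b hb
      exact Set.subset_iInter₂ fun t ht => hb ht)

/-- The order-convex subset of `P` with underlying set `X`. -/
def mk' (X : Set P) (hX : X.OrdConnected) : Co P := ⟨X, hX⟩

/-- The singleton `{p}`, as an order-convex set. -/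
def sngl (p : P) : Co P := ⟨{p}, Set.ordConnected_singleton⟩

/-- The empty order-convex set. -/
def emp : Co P := ⟨∅, Set.ordConnected_empty⟩

end Co

/-- `lengthLE P n` states that the poset `P` has length at most `n`, that is,
every finite chain of `P` has at most `n + 1` elements. -/
def lengthLE (P : Type*) [PartialOrder P] (n : ℕ) : Prop :=
  ∀ C : Finset P, IsChain (· ≤ ·) (C : Set P) → C.card ≤ n + 1

section Identities

/-- The Stirlitz identity (S). -/
def IdS (L : Type*) [Lattice L] : Prop :=
  ∀ a b b₀ b₁ c : L,
    a ⊓ ((b ⊓ (b₀ ⊔ b₁)) ⊔ c) =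
      (a ⊓ (b ⊓ (b₀ ⊔ b₁)))
      ⊔ (a ⊓ (b₀ ⊔ c) ⊓ ((b ⊓ (b₀ ⊔ b₁) ⊓ (a ⊔ b₀)) ⊔ c))
      ⊔ (a ⊓ (b₁ ⊔ c) ⊓ ((b ⊓ (b₀ ⊔ b₁) ⊓ (a ⊔ b₁)) ⊔ c))

/-- The Udav identity (U). -/
def IdU (L : Type*) [Lattice L] : Prop :=
  ∀ x x₀ x₁ x₂ : L,
    x ⊓ (x₀ ⊔ x₁) ⊓ (x₁ ⊔ x₂) ⊓ (x₀ ⊔ x₂) =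
      (x ⊓ x₀ ⊓ (x₁ ⊔ x₂)) ⊔ (x ⊓ x₁ ⊓ (x₀ ⊔ x₂)) ⊔ (x ⊓ x₂ ⊓ (x₀ ⊔ x₁))

/-- The Bond identity (B). -/
def IdB (L : Type*) [Lattice L] : Prop :=
  ∀ x a₀ a₁ b₀ b₁ : L,
    x ⊓ (a₀ ⊔ a₁) ⊓ (b₀ ⊔ b₁) =
      (x ⊓ a₀ ⊓ (b₀ ⊔ b₁)) ⊔ (x ⊓ a₁ ⊓ (b₀ ⊔ b₁))
      ⊔ (x ⊓ b₀ ⊓ (a₀ ⊔ a₁)) ⊔ (x ⊓ b₁ ⊓ (a₀ ⊔ a₁))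
      ⊔ (x ⊓ (a₀ ⊔ a₁) ⊓ (b₀ ⊔ b₁) ⊓ (a₀ ⊔ b₀) ⊓ (a₁ ⊔ b₁))
      ⊔ (x ⊓ (a₀ ⊔ a₁) ⊓ (b₀ ⊔ b₁) ⊓ (a₀ ⊔ b₁) ⊓ (a₁ ⊔ b₀))

/-- The identity (L₂). -/
def IdL2 (L : Type*) [Lattice L] : Prop :=
  ∀ a b b' c c' : L,
    a ⊓ ((b ⊓ (c ⊔ c')) ⊔ b') =
      (a ⊓ b ⊓ (c ⊔ c')) ⊔ (a ⊓ ((b ⊓ c) ⊔ b')) ⊔ (a ⊓ ((b ⊓ c') ⊔ b'))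

variable {L : Type*} [Lattice L]

/-- The lattice polynomial `U_{i,n}` (in the variables `x₀, …, xₙ, x'₁, …, x'ₙ`). -/
def Upoly (x x' : ℕ → L) (n : ℕ) (i : ℕ) : L :=
  if h : n ≤ i then x n
  else x i ⊓ (Upoly x x' n (i + 1) ⊔ x' (i + 1))
  termination_by n - i
  decreasing_by omega

/-- The lattice polynomial `V_{i,j,n}`. -/
def Vpoly (x x' : ℕ → L) (n i : ℕ) (j : ℕ) : L :=
  if h : i ≤ j then (x i ⊓ Upoly x x' n (i + 1)) ⊔ (x i ⊓ x' (i + 1))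
  else x j ⊓ (Vpoly x x' n i (j + 1) ⊔ x' (j + 1))
  termination_by i - j
  decreasing_by omega

/-- The lattice polynomial `W_{i,j,n}`. -/
def Wpoly (x x' : ℕ → L) (n i : ℕ) (j : ℕ) : L :=
  if h : i ≤ j then
    x i ⊓ (x' (i + 1) ⊔ x' (i + 2)) ⊓ ((Upoly x x' n (i + 1) ⊓ (x i ⊔ x' (i + 2))) ⊔ x' (i + 1))
  else x j ⊓ (Wpoly x x' n i (j + 1) ⊔ x' (j + 1))
  termination_by i - j
  decreasing_by omega

/-- `bigJoin f k = f 0 ⊔ f 1 ⊔ ⋯ ⊔ f k`. -/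
def bigJoin (f : ℕ → L) : ℕ → L
  | 0 => f 0
  | k + 1 => bigJoin f k ⊔ f (k + 1)

end Identities

/-- The identity (Hₙ) : `Uₙ = ⋁_{0 ≤ i ≤ n-1} V_{i,n} ∨ ⋁_{0 ≤ i ≤ n-2} W_{i,n}`
(intended for `n ≥ 1`). -/
def IdH (n : ℕ) (L : Type*) [Lattice L] : Prop :=
  ∀ x x' : ℕ → L,
    Upoly x x' n 0 =
      bigJoin (fun i =>
        if i + 2 ≤ n then Vpoly x x' n i 0 ⊔ Wpoly x x' n i 0 else Vpoly x x' n i 0) (n - 1)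

/-- The identity (H_{m,n}) (intended for `m, n ≥ 1`); the common base point is
`x 0 = y 0 = t`. -/
def IdHmn (m n : ℕ) (L : Type*) [Lattice L] : Prop :=
  ∀ x x' y y' : ℕ → L, x 0 = y 0 →
    Upoly x x' m 0 ⊓ Upoly y y' n 0 =
      bigJoin (fun i =>
          if i + 2 ≤ m then
            (Vpoly x x' m i 0 ⊓ Upoly y y' n 0) ⊔ (Wpoly x x' m i 0 ⊓ Upoly y y' n 0)
          else Vpoly x x' m i 0 ⊓ Upoly y y' n 0) (m - 1)
      ⊔ bigJoin (fun j =>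
          if j + 2 ≤ n then
            (Upoly x x' m 0 ⊓ Vpoly y y' n j 0) ⊔ (Upoly x x' m 0 ⊓ Wpoly y y' n j 0)
          else Upoly x x' m 0 ⊓ Vpoly y y' n j 0) (n - 1)
      ⊔ (Upoly x x' m 0 ⊓ Upoly y y' n 0 ⊓ (x 1 ⊔ y' 1) ⊓ (x' 1 ⊔ y 1))

/-- `p` is join-irreducible: `p = x ⊔ y` implies `p = x` or `p = y`. -/
def JIrr {L : Type*} [Lattice L] (p : L) : Prop :=
  ∀ x y : L, p = x ⊔ y → p = x ∨ p = y

/-- The join-dependency relation `p D q`. -/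
def DRel {L : Type*} [Lattice L] (p q : L) : Prop :=
  p ≠ q ∧ ∃ x : L, p ≤ q ⊔ x ∧ ∀ y < q, ¬ p ≤ y ⊔ x

/-- A subset `S` of a lattice `L` is a join-seed. -/
def JoinSeed (L : Type*) [Lattice L] (S : Set L) : Prop :=
  (∀ p ∈ S, JIrr p) ∧
  (∀ a : L, ∃ T ⊆ S, IsLUB T a) ∧
  (∀ p ∈ S, ∀ a b : L, p ≤ a ⊔ b → ¬ p ≤ a → ¬ p ≤ b →
    ∃ x ∈ S, ∃ y ∈ S, x ≤ a ∧ y ≤ b ∧ p ≤ x ⊔ y ∧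
      (∀ x' < x, ¬ p ≤ x' ⊔ y) ∧ (∀ y' < y, ¬ p ≤ x ⊔ y'))

/-- The poset `P_{I,J} = I ∪ {p} ∪ J`, where every element of `I` is below `p`,
`p` is below every element of `J`, every element of `I` is below every element
of `J`, and there are no other strict comparabilities. -/
def PIJ (I J : Type*) : Type _ := I ⊕ (Unit ⊕ J)

namespace PIJ

variable {I J : Type*}

/-- The rank (height) of an element of `P_{I,J}`. -/
def rank (a : PIJ I J) : ℕ :=
  Sum.elim (fun _ => 0) (Sum.elim (fun _ => 1) fun _ => 2) a

instance : PartialOrder (PIJ I J) where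
  le a b := a = b ∨ rank a < rank b
  le_refl a := Or.inl rfl
  le_trans a b c hab hbc := by
    rcases hab with rfl | h
    · exact hbc
    · rcases hbc with rfl | h'
      · exact Or.inr h
      · exact Or.inr (h.trans h')
  le_antisymm a b hab hba := by
    rcases hab with rfl | h
    · rfl
    · rcases hba with rfl | h'
      · rfl
      · omega

end PIJ

/-- A poset is tree-like if it has no infinite bounded chain and between any two
points there is at most one repetition-free finite path with respect to the
covering relation. -/
def TreeLike (P : Type*) [PartialOrder P] : Prop :=
  (∀ C : Set P, IsChain (· ≤ ·) C → BddAbove C → BddBelow C → C.Finite) ∧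
  (∀ a b : P, ∀ l₁ l₂ : List P,
    l₁.Nodup → l₁.head? = some a → l₁.getLast? = some b →
      l₁.Chain' (fun u v => u ⋖ v ∨ v ⋖ u) →
    l₂.Nodup → l₂.head? = some a → l₂.getLast? = some b →
      l₂.Chain' (fun u v => u ⋖ v ∨ v ⋖ u) →
    l₁ = l₂)

/-- A subset `U` of a poset `P` is `D`-closed. -/
def DClosed {P : Type*} [PartialOrder P] (U : Set P) : Prop :=
  ∀ x p y : P, x < p → p < y → (x ∈ U ∨ y ∈ U) → p ∈ U

/-- A complete congruence of a complete lattice. -/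
structure IsCompleteCongr {L : Type*} [CompleteLattice L] (θ : L → L → Prop) : Prop where
  refl : ∀ x, θ x x
  symm : ∀ {x y}, θ x y → θ y x
  trans : ∀ {x y z}, θ x y → θ y z → θ x z
  sup : ∀ {a b c d}, θ a b → θ c d → θ (a ⊔ c) (b ⊔ d)
  inf : ∀ {a b c d}, θ a b → θ c d → θ (a ⊓ c) (b ⊓ d)
  cSup : ∀ (x : L) (Y : Set L), Y.Nonempty → (∀ y ∈ Y, θ x y) → θ x (sSup Y)
  cInf : ∀ (x : L) (Y : Set L), Y.Nonempty → (∀ y ∈ Y, θ x y) → θ x (sInf Y)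

/-- The map `h_U : Co(P) → Co(P ∖ U)`, `X ↦ X ∖ U`. -/
def coRestrict {P : Type*} [PartialOrder P] (U : Set P) (X : Co P) :
    Co {p : P // p ∉ U} :=
  ⟨Subtype.val ⁻¹' X.1, by
    constructor
    rintro a ha b hb z hz
    exact X.2.out ha hb ⟨hz.1, hz.2⟩⟩

/-- The lattice `D(P)` of all `D`-closed subsets of a poset `P`. -/
def DSub (P : Type*) [PartialOrder P] : Type _ := {U : Set P // DClosed U}

namespace DSub

variable {P : Type*} [PartialOrder P]

instance : PartialOrder (DSub P) := Subtype.partialOrder _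

instance : InfSet (DSub P) :=
  ⟨fun S => ⟨⋂ U ∈ S, U.1, by
    intro x p y h1 h2 h3
    simp only [Set.mem_iInter] at h3 ⊢
    intro U hU
    exact U.2 x p y h1 h2 (h3.imp (fun h => h U hU) fun h => h U hU)⟩⟩

noncomputable instance : CompleteLattice (DSub P) :=
  completeLatticeOfInf (DSub P) (by
    intro S
    constructor
    · intro t ht
      exact Set.biInter_subset_of_mem (t := fun U => U.1) ht
    · intro b hb
      exact Set.subset_iInter₂ fun t ht => hb ht)

end DSub


section AuxCo

variable {P : Type*} [PartialOrder P]

namespace CoAux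

lemma le_iff {X Y : Co P} : X ≤ Y ↔ X.1 ⊆ Y.1 := Iff.rfl

lemma inf_coe (X Y : Co P) : (X ⊓ Y).1 = X.1 ∩ Y.1 := by
  apply subset_antisymm
  · exact Set.subset_inter (le_iff.1 inf_le_left) (le_iff.1 inf_le_right)
  · have h : Co.mk' (X.1 ∩ Y.1) (X.2.inter Y.2) ≤ X ⊓ Y :=
      le_inf (le_iff.2 Set.inter_subset_left) (le_iff.2 Set.inter_subset_right)
    exact le_iff.1 h

/-- The order-convex hull of the union of two sets. -/
def hull (A B : Set P) : Set P := {p | ∃ a ∈ A ∪ B, ∃ b ∈ A ∪ B, a ≤ p ∧ p ≤ b}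

lemma hull_ordConnected (A B : Set P) : (hull A B).OrdConnected := by
  refine ⟨fun u hu v hv z hz => ?_⟩
  obtain ⟨a, ha, -, -, hau, -⟩ := hu
  obtain ⟨-, -, d, hd, -, hvd⟩ := hv
  exact ⟨a, ha, d, hd, hau.trans hz.1, hz.2.trans hvd⟩

lemma sup_coe (X Y : Co P) : (X ⊔ Y).1 = hull X.1 Y.1 := by
  apply subset_antisymm
  · refine le_iff.1 (sup_le (c := Co.mk' (hull X.1 Y.1) (hull_ordConnected _ _)) ?_ ?_)
    · intro p hp; exact ⟨p, Or.inl hp, p, Or.inl hp, le_rfl, le_rfl⟩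
    · intro p hp; exact ⟨p, Or.inr hp, p, Or.inr hp, le_rfl, le_rfl⟩
  · rintro p ⟨a, ha, b, hb, hap, hpb⟩
    have hX : X.1 ⊆ (X ⊔ Y).1 := le_iff.1 le_sup_left
    have hY : Y.1 ⊆ (X ⊔ Y).1 := le_iff.1 le_sup_right
    have ha' : a ∈ (X ⊔ Y).1 := ha.elim (fun h => hX h) (fun h => hY h)
    have hb' : b ∈ (X ⊔ Y).1 := hb.elim (fun h => hX h) (fun h => hY h)
    exact (X ⊔ Y).2.out ha' hb' ⟨hap, hpb⟩

lemma mem_sup {X Y : Co P} {p : P} :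
    p ∈ (X ⊔ Y).1 ↔ ∃ a ∈ X.1 ∪ Y.1, ∃ b ∈ X.1 ∪ Y.1, a ≤ p ∧ p ≤ b := by
  rw [sup_coe]; rfl

lemma sup_empty_empty {X Y : Co P} (hX : X.1 = ∅) (hY : Y.1 = ∅) : (X ⊔ Y).1 = ∅ := by
  rw [sup_coe]
  ext p
  simp only [hull, hX, hY, Set.mem_setOf_eq, Set.union_self, Set.mem_empty_iff_false,
    Set.mem_union, or_self]
  exact ⟨fun h => h.choose_spec.1, False.elim⟩

lemma sup_left_empty {X Y : Co P} (hX : X.1 = ∅) : (X ⊔ Y).1 = Y.1 := by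
  rw [sup_coe]
  ext p
  constructor
  · rintro ⟨a, ha, b, hb, hab, hpb⟩
    rw [hX] at ha hb
    simp only [Set.empty_union] at ha hb
    exact Y.2.out ha hb ⟨hab, hpb⟩
  · intro hp
    exact ⟨p, Or.inr hp, p, Or.inr hp, le_rfl, le_rfl⟩

end CoAux

end AuxCo


section AuxPoly

variable {L : Type*} [Lattice L]

lemma Upoly_top (x x' : ℕ → L) (n : ℕ) : Upoly x x' n n = x n := by
  rw [Upoly]; simp

lemma Upoly_of_lt (x x' : ℕ → L) {n i : ℕ} (h : i < n) :
    Upoly x x' n i = x i ⊓ (Upoly x x' n (i + 1) ⊔ x' (i + 1)) := by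
  rw [Upoly]; simp [Nat.not_le.2 h]

lemma Vpoly_diag (x x' : ℕ → L) (n i : ℕ) :
    Vpoly x x' n i i = (x i ⊓ Upoly x x' n (i + 1)) ⊔ (x i ⊓ x' (i + 1)) := by
  rw [Vpoly]; simp

lemma Vpoly_of_lt (x x' : ℕ → L) {n i j : ℕ} (h : j < i) :
    Vpoly x x' n i j = x j ⊓ (Vpoly x x' n i (j + 1) ⊔ x' (j + 1)) := by
  rw [Vpoly]; simp [Nat.not_le.2 h]

lemma Wpoly_diag (x x' : ℕ → L) (n i : ℕ) :
    Wpoly x x' n i i =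
      x i ⊓ (x' (i + 1) ⊔ x' (i + 2)) ⊓
        ((Upoly x x' n (i + 1) ⊓ (x i ⊔ x' (i + 2))) ⊔ x' (i + 1)) := by
  rw [Wpoly]; simp

lemma Wpoly_of_lt (x x' : ℕ → L) {n i j : ℕ} (h : j < i) :
    Wpoly x x' n i j = x j ⊓ (Wpoly x x' n i (j + 1) ⊔ x' (j + 1)) := by
  rw [Wpoly]; simp [Nat.not_le.2 h]

lemma Upoly_le_x (x x' : ℕ → L) {n i : ℕ} (h : i ≤ n) : Upoly x x' n i ≤ x i := by
  rcases eq_or_lt_of_le h with rfl | h'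
  · rw [Upoly_top]
  · rw [Upoly_of_lt x x' h']; exact inf_le_left

lemma Vpoly_le_Upoly (x x' : ℕ → L) {n i : ℕ} (hi : i < n) :
    ∀ j, j ≤ i → Vpoly x x' n i j ≤ Upoly x x' n j := by
  intro j hj
  rcases eq_or_lt_of_le hj with rfl | hjlt
  · rw [Vpoly_diag, Upoly_of_lt x x' hi]
    exact sup_le (le_inf inf_le_left (inf_le_right.trans le_sup_left))
      (le_inf inf_le_left (inf_le_right.trans le_sup_right))
  · have IH := Vpoly_le_Upoly x x' hi (j + 1) hjlt
    rw [Vpoly_of_lt x x' hjlt, Upoly_of_lt x x' (lt_of_le_of_lt hj hi)]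
    exact inf_le_inf_left _ (sup_le_sup_right IH _)
  termination_by j => i - j
  decreasing_by omega

lemma Wpoly_le_Upoly (x x' : ℕ → L) {n i : ℕ} (hi : i + 2 ≤ n) :
    ∀ j, j ≤ i → Wpoly x x' n i j ≤ Upoly x x' n j := by
  intro j hj
  rcases eq_or_lt_of_le hj with rfl | hjlt
  · rw [Wpoly_diag, Upoly_of_lt x x' (by omega : j < n)]
    exact le_inf (inf_le_left.trans inf_le_left)
      (inf_le_right.trans (sup_le_sup_right inf_le_left _))
  · have IH := Wpoly_le_Upoly x x' hi (j + 1) hjlt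
    rw [Wpoly_of_lt x x' hjlt, Upoly_of_lt x x' (by omega : j < n)]
    exact inf_le_inf_left _ (sup_le_sup_right IH _)
  termination_by j => i - j
  decreasing_by omega

lemma bigJoin_le {f : ℕ → L} {c : L} {K : ℕ} (h : ∀ k, k ≤ K → f k ≤ c) :
    bigJoin f K ≤ c := by
  induction K with
  | zero => exact h 0 le_rfl
  | succ K IH =>
    exact sup_le (IH fun k hk => h k (hk.trans (Nat.le_succ K))) (h (K + 1) le_rfl)

lemma le_bigJoin (f : ℕ → L) {k K : ℕ} (h : k ≤ K) : f k ≤ bigJoin f K := by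
  induction K with
  | zero => rw [Nat.le_zero.1 h]; exact le_rfl
  | succ K IH =>
    rcases Nat.lt_or_ge k (K + 1) with h' | h'
    · exact (IH (by omega)).trans le_sup_left
    · have : k = K + 1 := by omega
      rw [this]; exact le_sup_right

/-- The right-hand side of (H_{m,n}) is always below the left-hand side. -/
lemma Hmn_rhs_le_lhs (m n : ℕ) (hm : 0 < m) (hn : 0 < n) (x x' y y' : ℕ → L) :
    bigJoin (fun i =>
          if i + 2 ≤ m then
            (Vpoly x x' m i 0 ⊓ Upoly y y' n 0) ⊔ (Wpoly x x' m i 0 ⊓ Upoly y y' n 0)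
          else Vpoly x x' m i 0 ⊓ Upoly y y' n 0) (m - 1)
      ⊔ bigJoin (fun j =>
          if j + 2 ≤ n then
            (Upoly x x' m 0 ⊓ Vpoly y y' n j 0) ⊔ (Upoly x x' m 0 ⊓ Wpoly y y' n j 0)
          else Upoly x x' m 0 ⊓ Vpoly y y' n j 0) (n - 1)
      ⊔ (Upoly x x' m 0 ⊓ Upoly y y' n 0 ⊓ (x 1 ⊔ y' 1) ⊓ (x' 1 ⊔ y 1))
      ≤ Upoly x x' m 0 ⊓ Upoly y y' n 0 := by
  refine sup_le (sup_le (bigJoin_le ?_) (bigJoin_le ?_)) ?_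
  · intro k hk
    have hV : Vpoly x x' m k 0 ⊓ Upoly y y' n 0 ≤ Upoly x x' m 0 ⊓ Upoly y y' n 0 :=
      inf_le_inf_right _ (Vpoly_le_Upoly x x' (by omega) 0 (Nat.zero_le k))
    split
    · next hk2 =>
      exact sup_le hV
        (inf_le_inf_right _ (Wpoly_le_Upoly x x' (by omega) 0 (Nat.zero_le k)))
    · exact hV
  · intro k hk
    have hV : Upoly x x' m 0 ⊓ Vpoly y y' n k 0 ≤ Upoly x x' m 0 ⊓ Upoly y y' n 0 :=
      inf_le_inf_left _ (Vpoly_le_Upoly y y' (by omega) 0 (Nat.zero_le k))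
    split
    · next hk2 =>
      exact sup_le hV
        (inf_le_inf_left _ (Wpoly_le_Upoly y y' (by omega) 0 (Nat.zero_le k)))
    · exact hV
  · exact inf_le_left.trans inf_le_left

end AuxPoly


section AuxHard

open CoAux

variable {P : Type*} [PartialOrder P]

lemma mem_Upoly_iff (x x' : ℕ → Co P) {m i : ℕ} (h : i < m) {p : P} :
    p ∈ (Upoly x x' m i).1 ↔ p ∈ (x i).1 ∧
      ∃ a ∈ (Upoly x x' m (i+1)).1 ∪ (x' (i+1)).1,
      ∃ b ∈ (Upoly x x' m (i+1)).1 ∪ (x' (i+1)).1, a ≤ p ∧ p ≤ b := by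
  rw [Upoly_of_lt x x' h, inf_coe, Set.mem_inter_iff, mem_sup]

lemma mem_Vpoly_diag_left (x x' : ℕ → Co P) (m i : ℕ) {p : P}
    (h1 : p ∈ (x i).1) (h2 : p ∈ (Upoly x x' m (i+1)).1) :
    p ∈ (Vpoly x x' m i i).1 := by
  rw [Vpoly_diag, sup_coe]
  refine ⟨p, Or.inl ?_, p, Or.inl ?_, le_rfl, le_rfl⟩ <;> (rw [inf_coe]; exact ⟨h1, h2⟩)

lemma mem_Vpoly_diag_right (x x' : ℕ → Co P) (m i : ℕ) {p : P}
    (h1 : p ∈ (x i).1) (h2 : p ∈ (x' (i+1)).1) :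
    p ∈ (Vpoly x x' m i i).1 := by
  rw [Vpoly_diag, sup_coe]
  refine ⟨p, Or.inr ?_, p, Or.inr ?_, le_rfl, le_rfl⟩ <;> (rw [inf_coe]; exact ⟨h1, h2⟩)

lemma mem_Vpoly_step (x x' : ℕ → Co P) {m i j : ℕ} (h : j < i) {p a b : P}
    (hp : p ∈ (x j).1) (ha : a ∈ (Vpoly x x' m i (j+1)).1) (hb : b ∈ (x' (j+1)).1)
    (hord : a ≤ p ∧ p ≤ b ∨ b ≤ p ∧ p ≤ a) :
    p ∈ (Vpoly x x' m i j).1 := by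
  rw [Vpoly_of_lt x x' h, inf_coe]
  refine ⟨hp, mem_sup.2 ?_⟩
  rcases hord with ⟨h1, h2⟩ | ⟨h1, h2⟩
  · exact ⟨a, Or.inl ha, b, Or.inr hb, h1, h2⟩
  · exact ⟨b, Or.inr hb, a, Or.inl ha, h1, h2⟩

lemma mem_Wpoly_step (x x' : ℕ → Co P) {m i j : ℕ} (h : j < i) {p a b : P}
    (hp : p ∈ (x j).1) (ha : a ∈ (Wpoly x x' m i (j+1)).1) (hb : b ∈ (x' (j+1)).1)
    (hord : a ≤ p ∧ p ≤ b ∨ b ≤ p ∧ p ≤ a) :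
    p ∈ (Wpoly x x' m i j).1 := by
  rw [Wpoly_of_lt x x' h, inf_coe]
  refine ⟨hp, mem_sup.2 ?_⟩
  rcases hord with ⟨h1, h2⟩ | ⟨h1, h2⟩
  · exact ⟨a, Or.inl ha, b, Or.inr hb, h1, h2⟩
  · exact ⟨b, Or.inr hb, a, Or.inl ha, h1, h2⟩

lemma mem_Wpoly_diag (x x' : ℕ → Co P) (m i : ℕ) {p u c1 c2 : P}
    (hp : p ∈ (x i).1) (hu : u ∈ (Upoly x x' m (i+1)).1)
    (hc1 : c1 ∈ (x' (i+1)).1) (hc2 : c2 ∈ (x' (i+2)).1)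
    (hord : c2 ≤ u ∧ u ≤ p ∧ p ≤ c1 ∨ c1 ≤ p ∧ p ≤ u ∧ u ≤ c2) :
    p ∈ (Wpoly x x' m i i).1 := by
  rw [Wpoly_diag, inf_coe, inf_coe]
  rcases hord with ⟨h1, h2, h3⟩ | ⟨h1, h2, h3⟩
  · refine ⟨⟨hp, mem_sup.2 ⟨c2, Or.inr hc2, c1, Or.inl hc1, h1.trans h2, h3⟩⟩, ?_⟩
    refine mem_sup.2 ⟨u, Or.inl ?_, c1, Or.inr hc1, h2, h3⟩
    rw [inf_coe]
    exact ⟨hu, mem_sup.2 ⟨c2, Or.inr hc2, p, Or.inl hp, h1, h2⟩⟩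
  · refine ⟨⟨hp, mem_sup.2 ⟨c1, Or.inl hc1, c2, Or.inr hc2, h1, h2.trans h3⟩⟩, ?_⟩
    refine mem_sup.2 ⟨c1, Or.inr hc1, u, Or.inl ?_, h1, h2⟩
    rw [inf_coe]
    exact ⟨hu, mem_sup.2 ⟨p, Or.inl hp, c2, Or.inr hc2, h2, h3⟩⟩

/-- The key structural analysis of membership in `Upoly`. -/
lemma Upoly_claim (x x' : ℕ → Co P) (m i : ℕ) (hi : i < m) (p : P)
    (hp : p ∈ (Upoly x x' m i).1) :
    (∃ k, i ≤ k ∧ k < m ∧ p ∈ (Vpoly x x' m k i).1) ∨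
    (∃ k, i ≤ k ∧ k + 2 ≤ m ∧ p ∈ (Wpoly x x' m k i).1) ∨
    (∃ a : ℕ → P, a i = p ∧ (∀ j, i ≤ j → j ≤ m → a j ∈ (Upoly x x' m j).1) ∧
      (∀ j, i ≤ j → j < m → a (j+1) < a j) ∧ ∃ b ∈ (x' (i+1)).1, p < b) ∨
    (∃ a : ℕ → P, a i = p ∧ (∀ j, i ≤ j → j ≤ m → a j ∈ (Upoly x x' m j).1) ∧
      (∀ j, i ≤ j → j < m → a j < a (j+1)) ∧ ∃ b ∈ (x' (i+1)).1, b < p) := by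
  obtain ⟨hpx, a0, ha0, b0, hb0, hab1, hab2⟩ := (mem_Upoly_iff x x' hi).1 hp
  -- helper to build the "extend chain" functions
  have key : ∀ u c, u ∈ (Upoly x x' m (i+1)).1 → c ∈ (x' (i+1)).1 →
      (u ≤ p ∧ p ≤ c ∨ c ≤ p ∧ p ≤ u) →
      (∃ k, i ≤ k ∧ k < m ∧ p ∈ (Vpoly x x' m k i).1) ∨
      (∃ k, i ≤ k ∧ k + 2 ≤ m ∧ p ∈ (Wpoly x x' m k i).1) ∨
      (∃ a : ℕ → P, a i = p ∧ (∀ j, i ≤ j → j ≤ m → a j ∈ (Upoly x x' m j).1) ∧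
        (∀ j, i ≤ j → j < m → a (j+1) < a j) ∧ ∃ b ∈ (x' (i+1)).1, p < b) ∨
      (∃ a : ℕ → P, a i = p ∧ (∀ j, i ≤ j → j ≤ m → a j ∈ (Upoly x x' m j).1) ∧
        (∀ j, i ≤ j → j < m → a j < a (j+1)) ∧ ∃ b ∈ (x' (i+1)).1, b < p) := by
    intro u c hu hc hord
    -- dispose of the degenerate (non-strict) cases
    rcases hord with ⟨hup, hpc⟩ | ⟨hcp, hpu⟩
    · rcases eq_or_lt_of_le hup with rfl | hup'
      · exact Or.inl ⟨i, le_rfl, hi, mem_Vpoly_diag_left x x' m i hpx hu⟩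
      rcases eq_or_lt_of_le hpc with rfl | hpc'
      · exact Or.inl ⟨i, le_rfl, hi, mem_Vpoly_diag_right x x' m i hpx hc⟩
      -- strict case, "descending" orientation : u < p < c
      rcases Nat.lt_or_ge (i+1) m with him | him
      · rcases Upoly_claim x x' m (i+1) him u hu with
          ⟨k, hk1, hk2, hkV⟩ | ⟨k, hk1, hk2, hkW⟩ |
          ⟨a, hai, haU, hadesc, b', hb', hub'⟩ | ⟨a, hai, haU, haasc, b', hb', hub'⟩
        · exact Or.inl ⟨k, by omega, hk2,
            mem_Vpoly_step x x' (by omega) hpx hkV hc (Or.inl ⟨hup'.le, hpc'.le⟩)⟩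
        · exact Or.inr (Or.inl ⟨k, by omega, hk2,
            mem_Wpoly_step x x' (by omega) hpx hkW hc (Or.inl ⟨hup'.le, hpc'.le⟩)⟩)
        · -- extend the descending chain
          refine Or.inr (Or.inr (Or.inl ⟨fun j => if j ≤ i then p else a j, by simp,
            ?_, ?_, c, hc, hpc'⟩))
          · intro j h1 h2
            beta_reduce
            by_cases hji : j ≤ i
            · have : j = i := le_antisymm hji h1
              subst this
              simpa using hp
            · rw [if_neg hji]
              exact haU j (by omega) h2
          · intro j h1 h2
            beta_reduce
            by_cases hji : j ≤ i
            · have : j = i := le_antisymm hji h1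
              subst this
              rw [if_neg (by omega), if_pos le_rfl, hai]
              exact hup'
            · rw [if_neg (by omega), if_neg hji]
              exact hadesc j (by omega) h2
        · -- zigzag : b' < u < p < c, with b' ∈ x'(i+2)
          exact Or.inr (Or.inl ⟨i, le_rfl, by omega,
            mem_Wpoly_diag x x' m i hpx hu hc hb'
              (Or.inl ⟨hub'.le, hup'.le, hpc'.le⟩)⟩)
      · -- base case : i + 1 = m
        have hm' : m = i + 1 := by omega
        subst hm'
        refine Or.inr (Or.inr (Or.inl ⟨fun j => if j = i then p else u, by simp,
          ?_, ?_, c, hc, hpc'⟩))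
        · intro j h1 h2
          beta_reduce
          rcases eq_or_lt_of_le h1 with rfl | h1'
          · simpa using hp
          · have : j = i + 1 := by omega
            subst this
            rw [if_neg (by omega)]
            exact hu
        · intro j h1 h2
          beta_reduce
          have : j = i := by omega
          subst this
          rw [if_neg (by omega), if_pos rfl]
          exact hup'
    · rcases eq_or_lt_of_le hpu with rfl | hpu'
      · exact Or.inl ⟨i, le_rfl, hi, mem_Vpoly_diag_left x x' m i hpx hu⟩
      rcases eq_or_lt_of_le hcp with rfl | hcp'
      · exact Or.inl ⟨i, le_rfl, hi, mem_Vpoly_diag_right x x' m i hpx hc⟩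
      -- strict case, "ascending" orientation : c < p < u
      rcases Nat.lt_or_ge (i+1) m with him | him
      · rcases Upoly_claim x x' m (i+1) him u hu with
          ⟨k, hk1, hk2, hkV⟩ | ⟨k, hk1, hk2, hkW⟩ |
          ⟨a, hai, haU, hadesc, b', hb', hub'⟩ | ⟨a, hai, haU, haasc, b', hb', hub'⟩
        · exact Or.inl ⟨k, by omega, hk2,
            mem_Vpoly_step x x' (by omega) hpx hkV hc (Or.inr ⟨hcp'.le, hpu'.le⟩)⟩
        · exact Or.inr (Or.inl ⟨k, by omega, hk2,
            mem_Wpoly_step x x' (by omega) hpx hkW hc (Or.inr ⟨hcp'.le, hpu'.le⟩)⟩)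
        · -- zigzag : c < p < u < b', with b' ∈ x'(i+2)
          exact Or.inr (Or.inl ⟨i, le_rfl, by omega,
            mem_Wpoly_diag x x' m i hpx hu hc hb'
              (Or.inr ⟨hcp'.le, hpu'.le, hub'.le⟩)⟩)
        · -- extend the ascending chain
          refine Or.inr (Or.inr (Or.inr ⟨fun j => if j ≤ i then p else a j, by simp,
            ?_, ?_, c, hc, hcp'⟩))
          · intro j h1 h2
            beta_reduce
            by_cases hji : j ≤ i
            · have : j = i := le_antisymm hji h1
              subst this
              simpa using hp
            · rw [if_neg hji]
              exact haU j (by omega) h2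
          · intro j h1 h2
            beta_reduce
            by_cases hji : j ≤ i
            · have : j = i := le_antisymm hji h1
              subst this
              rw [if_pos le_rfl, if_neg (by omega : ¬ j + 1 ≤ j), hai]
              exact hpu'
            · rw [if_neg hji, if_neg (by omega : ¬ j + 1 ≤ i)]
              exact haasc j (by omega) h2
      · -- base case : i + 1 = m
        have hm' : m = i + 1 := by omega
        subst hm'
        refine Or.inr (Or.inr (Or.inr ⟨fun j => if j = i then p else u, by simp,
          ?_, ?_, c, hc, hcp'⟩))
        · intro j h1 h2
          beta_reduce
          rcases eq_or_lt_of_le h1 with rfl | h1'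
          · simpa using hp
          · have : j = i + 1 := by omega
            subst this
            rw [if_neg (by omega)]
            exact hu
        · intro j h1 h2
          beta_reduce
          have : j = i := by omega
          subst this
          rw [if_pos rfl, if_neg (by omega)]
          exact hpu'
  rcases ha0 with haU | hax
  · rcases hb0 with hbU | hbx
    · exact Or.inl ⟨i, le_rfl, hi, mem_Vpoly_diag_left x x' m i hpx
        ((Upoly x x' m (i+1)).2.out haU hbU ⟨hab1, hab2⟩)⟩
    · exact key a0 b0 haU hbx (Or.inl ⟨hab1, hab2⟩)
  · rcases hb0 with hbU | hbx
    · exact key b0 a0 hbU hax (Or.inr ⟨hab1, hab2⟩)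
    · exact Or.inl ⟨i, le_rfl, hi, mem_Vpoly_diag_right x x' m i hpx
        ((x' (i+1)).2.out hax hbx ⟨hab1, hab2⟩)⟩
  termination_by m - i
  decreasing_by all_goals (simp_wf; omega)

end AuxHard


section AuxChain

variable {P : Type*} [PartialOrder P]

lemma no_long_chain {N : ℕ} (hlen : lengthLE P N) (f : ℕ → P) (K : ℕ)
    (hf : ∀ j, j < K → f j < f (j+1)) : K ≤ N := by
  classical
  have hmono : ∀ a b, a ≤ b → b ≤ K → f a ≤ f b := by
    intro a b hab hbK
    induction b with
    | zero => rw [Nat.le_zero.1 hab]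
    | succ b IH =>
      rcases Nat.lt_or_ge a (b+1) with h | h
      · exact (IH (by omega) (by omega)).trans (hf b (by omega)).le
      · have : a = b + 1 := by omega
        rw [this]
  have hstrict : ∀ a b, a < b → b ≤ K → f a < f b := by
    intro a b hab hbK
    have h1 : f a ≤ f (b-1) := hmono a (b-1) (by omega) (by omega)
    have h2 : f (b-1) < f b := by
      have h3 := hf (b-1) (by omega)
      have hb : b - 1 + 1 = b := by omega
      rwa [hb] at h3
    exact h1.trans_lt h2
  have hinj : Set.InjOn f ((Finset.range (K+1)) : Set ℕ) := by
    intro a ha b hb hfab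
    simp only [Finset.coe_range, Set.mem_Iio] at ha hb
    by_contra hne
    rcases Nat.lt_or_ge a b with h | h
    · exact absurd hfab (hstrict a b h (by omega)).ne
    · exact absurd hfab.symm (hstrict b a (by omega) (by omega)).ne
  have hcard : ((Finset.range (K+1)).image f).card = K + 1 := by
    rw [Finset.card_image_of_injOn hinj, Finset.card_range]
  have hchain : IsChain (· ≤ ·) (((Finset.range (K+1)).image f : Finset P) : Set P) := by
    intro u hu v hv _
    simp only [Finset.coe_image, Set.mem_image, Finset.mem_coe, Finset.mem_range] at hu hv
    obtain ⟨a, ha, rfl⟩ := hu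
    obtain ⟨b, hb, rfl⟩ := hv
    rcases Nat.lt_or_ge a b with h | h
    · exact Or.inl (hmono a b h.le (by omega))
    · exact Or.inr (hmono b a h (by omega))
  have := hlen _ hchain
  omega

lemma chain_extract : ∀ (k : ℕ) (C : Finset P), IsChain (· ≤ ·) (C : Set P) →
    k + 1 ≤ C.card → ∃ z : ℕ → P, (∀ j, j ≤ k → z j ∈ C) ∧ ∀ j, j < k → z j < z (j+1) := by
  classical
  intro k
  induction k with
  | zero =>
    intro C _ hcard
    obtain ⟨w, hw⟩ := Finset.card_pos.1 (show 0 < C.card by omega)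
    exact ⟨fun _ => w, fun j _ => hw, fun j hj => absurd hj (by omega)⟩
  | succ k IH =>
    intro C hC hcard
    obtain ⟨w, hwC, hwmax⟩ : ∃ w ∈ C, ∀ c ∈ C, ¬ w < c := by
      obtain ⟨w, hw⟩ := Finset.exists_maximal (Finset.card_pos.1 (show 0 < C.card by omega))
      exact ⟨w, hw.1, fun c hc h => h.not_ge (hw.2 hc h.le)⟩
    have hwtop : ∀ c ∈ C, c ≤ w := by
      intro c hc
      by_cases hcw : c = w
      · exact hcw.le
      · rcases hC hc hwC hcw with h | h
        · exact h
        · exact absurd (lt_of_le_of_ne h (fun e => hcw e.symm)) (hwmax c hc)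
    have hsub : IsChain (· ≤ ·) ((C.erase w : Finset P) : Set P) :=
      IsChain.mono (Finset.coe_subset.2 (Finset.erase_subset w C)) hC
    obtain ⟨z, hzC, hzinc⟩ := IH (C.erase w) hsub
      (by rw [Finset.card_erase_of_mem hwC]; omega)
    refine ⟨fun j => if j ≤ k then z j else w, ?_, ?_⟩
    · intro j hj
      beta_reduce
      by_cases h : j ≤ k
      · rw [if_pos h]; exact Finset.mem_of_mem_erase (hzC j h)
      · rw [if_neg h]; exact hwC
    · intro j hj
      beta_reduce
      by_cases h : j + 1 ≤ k
      · rw [if_pos (by omega : j ≤ k), if_pos h]; exact hzinc j (by omega)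
      · have hj' : j = k := by omega
        subst hj'
        rw [if_pos le_rfl, if_neg (by omega : ¬ j + 1 ≤ j)]
        have hzk := hzC j le_rfl
        exact lt_of_le_of_ne (hwtop _ (Finset.mem_of_mem_erase hzk))
          (Finset.ne_of_mem_erase hzk)

lemma bigJoin_coe_empty {f : ℕ → Co P} {K : ℕ} (h : ∀ k, k ≤ K → (f k).1 = ∅) :
    (bigJoin f K).1 = ∅ := by
  induction K with
  | zero => exact h 0 le_rfl
  | succ K IH => exact CoAux.sup_empty_empty (IH fun k hk => h k (by omega)) (h _ le_rfl)

end AuxChain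


section AuxEval

variable {P : Type*} [PartialOrder P]

lemma singleton_inter_singleton_empty {a b : P} (h : a ≠ b) :
    ({a} ∩ {b} : Set P) = ∅ := by
  rw [Set.singleton_inter_eq_empty]
  simpa using h

namespace HmnEval

/-- The assignments used to refute (H_{m,n}) on a long chain. -/
def xs (z : ℕ → P) (m : ℕ) : ℕ → Co P := fun i => Co.sngl (z (m - i))
def xs' (z : ℕ → P) (m n : ℕ) : ℕ → Co P := fun _ => Co.sngl (z (m + n))
def ys (z : ℕ → P) (m : ℕ) : ℕ → Co P := fun j => Co.sngl (z (m + j))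
def ys' (z : ℕ → P) : ℕ → Co P := fun _ => Co.sngl (z 0)

variable (z : ℕ → P) (m n : ℕ)

lemma Ux_eval (hz : ∀ a b, a < b → b ≤ m + n → z a < z b) (hn : 0 < n) :
    ∀ i, i ≤ m → (Upoly (xs z m) (xs' z m n) m i).1 = {z (m - i)} := by
  intro i hi
  rcases eq_or_lt_of_le hi with h | hi'
  · subst h
    rw [Upoly_top]
    rfl
  · rw [Upoly_of_lt _ _ hi', CoAux.inf_coe, CoAux.sup_coe,
      Ux_eval hz hn (i+1) (by omega)]
    refine subset_antisymm Set.inter_subset_left ?_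
    rintro q rfl
    refine ⟨rfl, ⟨z (m - (i+1)), Or.inl rfl, z (m + n), Or.inr rfl, ?_, ?_⟩⟩
    · exact (hz (m - (i+1)) (m - i) (by omega) (by omega)).le
    · exact (hz (m - i) (m + n) (by omega) (by omega)).le
  termination_by i => m - i
  decreasing_by all_goals (simp_wf; omega)

lemma Uy_eval (hz : ∀ a b, a < b → b ≤ m + n → z a < z b) (hm : 0 < m) :
    ∀ j, j ≤ n → (Upoly (ys z m) (ys' z) n j).1 = {z (m + j)} := by
  intro j hj
  rcases eq_or_lt_of_le hj with h | hj'
  · subst h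
    rw [Upoly_top]
    rfl
  · rw [Upoly_of_lt _ _ hj', CoAux.inf_coe, CoAux.sup_coe,
      Uy_eval hz hm (j+1) (by omega)]
    refine subset_antisymm Set.inter_subset_left ?_
    rintro q rfl
    refine ⟨rfl, ⟨z 0, Or.inr rfl, z (m + (j+1)), Or.inl rfl, ?_, ?_⟩⟩
    · exact (hz 0 (m + j) (by omega) (by omega)).le
    · exact (hz (m + j) (m + (j+1)) (by omega) (by omega)).le
  termination_by j => n - j
  decreasing_by all_goals (simp_wf; omega)

lemma Vx_eval (hz : ∀ a b, a < b → b ≤ m + n → z a < z b) (hn : 0 < n)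
    {k : ℕ} (hk : k < m) :
    ∀ j, j ≤ k → (Vpoly (xs z m) (xs' z m n) m k j).1 = ∅ := by
  intro j hj
  rcases eq_or_lt_of_le hj with h | hj'
  · subst h
    rw [Vpoly_diag]
    apply CoAux.sup_empty_empty
    · rw [CoAux.inf_coe, Ux_eval z m n hz hn (j+1) (by omega)]
      exact singleton_inter_singleton_empty
        ((hz (m - (j+1)) (m - j) (by omega) (by omega)).ne'
          : z (m - j) ≠ z (m - (j+1)))
    · rw [CoAux.inf_coe]
      exact singleton_inter_singleton_empty
        ((hz (m - j) (m + n) (by omega) (by omega)).ne : z (m - j) ≠ z (m + n))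
  · rw [Vpoly_of_lt _ _ hj', CoAux.inf_coe,
      CoAux.sup_left_empty (Vx_eval hz hn hk (j+1) (by omega))]
    exact singleton_inter_singleton_empty
      ((hz (m - j) (m + n) (by omega) (by omega)).ne : z (m - j) ≠ z (m + n))
  termination_by j => k - j
  decreasing_by all_goals (simp_wf; omega)

lemma Wx_eval (hz : ∀ a b, a < b → b ≤ m + n → z a < z b) (hn : 0 < n)
    {k : ℕ} (hk : k < m) :
    ∀ j, j ≤ k → (Wpoly (xs z m) (xs' z m n) m k j).1 = ∅ := by
  intro j hj
  rcases eq_or_lt_of_le hj with h | hj'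
  · subst h
    rw [Wpoly_diag, CoAux.inf_coe, CoAux.inf_coe]
    have h2 : ((xs z m j).1 ∩ (xs' z m n (j+1) ⊔ xs' z m n (j+2)).1 : Set P) = ∅ := by
      rw [CoAux.sup_coe]
      apply Set.eq_empty_iff_forall_notMem.2
      rintro q ⟨hq1, a, ha, b, hb, h1, h2⟩
      have ha' : a = z (m + n) := by
        rcases ha with h | h
        · exact h
        · exact h
      have hq' : q = z (m - j) := hq1
      have : z (m + n) ≤ z (m - j) := by rw [← hq', ← ha']; exact h1
      exact (hz (m - j) (m + n) (by omega) (by omega)).not_ge this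
    rw [h2, Set.empty_inter]
  · rw [Wpoly_of_lt _ _ hj', CoAux.inf_coe,
      CoAux.sup_left_empty (Wx_eval hz hn hk (j+1) (by omega))]
    exact singleton_inter_singleton_empty
      ((hz (m - j) (m + n) (by omega) (by omega)).ne : z (m - j) ≠ z (m + n))
  termination_by j => k - j
  decreasing_by all_goals (simp_wf; omega)

lemma Vy_eval (hz : ∀ a b, a < b → b ≤ m + n → z a < z b) (hm : 0 < m)
    {k : ℕ} (hk : k < n) :
    ∀ j, j ≤ k → (Vpoly (ys z m) (ys' z) n k j).1 = ∅ := by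
  intro j hj
  rcases eq_or_lt_of_le hj with h | hj'
  · subst h
    rw [Vpoly_diag]
    apply CoAux.sup_empty_empty
    · rw [CoAux.inf_coe, Uy_eval z m n hz hm (j+1) (by omega)]
      exact singleton_inter_singleton_empty
        ((hz (m + j) (m + (j+1)) (by omega) (by omega)).ne
          : z (m + j) ≠ z (m + (j+1)))
    · rw [CoAux.inf_coe]
      exact singleton_inter_singleton_empty
        ((hz 0 (m + j) (by omega) (by omega)).ne' : z (m + j) ≠ z 0)
  · rw [Vpoly_of_lt _ _ hj', CoAux.inf_coe,
      CoAux.sup_left_empty (Vy_eval hz hm hk (j+1) (by omega))]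
    exact singleton_inter_singleton_empty
      ((hz 0 (m + j) (by omega) (by omega)).ne' : z (m + j) ≠ z 0)
  termination_by j => k - j
  decreasing_by all_goals (simp_wf; omega)

lemma Wy_eval (hz : ∀ a b, a < b → b ≤ m + n → z a < z b) (hm : 0 < m)
    {k : ℕ} (hk : k < n) :
    ∀ j, j ≤ k → (Wpoly (ys z m) (ys' z) n k j).1 = ∅ := by
  intro j hj
  rcases eq_or_lt_of_le hj with h | hj'
  · subst h
    rw [Wpoly_diag, CoAux.inf_coe, CoAux.inf_coe]
    have h2 : ((ys z m j).1 ∩ (ys' z (j+1) ⊔ ys' z (j+2)).1 : Set P) = ∅ := by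
      rw [CoAux.sup_coe]
      apply Set.eq_empty_iff_forall_notMem.2
      rintro q ⟨hq1, a, ha, b, hb, h1, h2⟩
      have hb' : b = z 0 := by
        rcases hb with h | h
        · exact h
        · exact h
      have hq' : q = z (m + j) := hq1
      have : z (m + j) ≤ z 0 := by rw [← hq', ← hb']; exact h2
      exact (hz 0 (m + j) (by omega) (by omega)).not_ge this
    rw [h2, Set.empty_inter]
  · rw [Wpoly_of_lt _ _ hj', CoAux.inf_coe,
      CoAux.sup_left_empty (Wy_eval hz hm hk (j+1) (by omega))]
    exact singleton_inter_singleton_empty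
      ((hz 0 (m + j) (by omega) (by omega)).ne' : z (m + j) ≠ z 0)
  termination_by j => k - j
  decreasing_by all_goals (simp_wf; omega)

end HmnEval

end AuxEval

theorem stmt19 (P : Type*) [PartialOrder P] (m n : ℕ) (hm : 0 < m) (hn : 0 < n) :
    IdHmn m n (Co P) ↔ lengthLE P (m + n - 1) := by
  constructor
  · -- the identity implies the length bound
    intro hid C hC
    by_contra hbad
    push_neg at hbad
    obtain ⟨z, hzC, hzinc⟩ := chain_extract (m + n) C hC (by omega)
    have hz : ∀ a b, a < b → b ≤ m + n → z a < z b := by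
      have hmono : ∀ a b, a ≤ b → b ≤ m + n → z a ≤ z b := by
        intro a b hab hbK
        induction b with
        | zero => rw [Nat.le_zero.1 hab]
        | succ b IH =>
          rcases Nat.lt_or_ge a (b+1) with h | h
          · exact (IH (by omega) (by omega)).trans (hzinc b (by omega)).le
          · have : a = b + 1 := by omega
            rw [this]
      intro a b hab hbK
      have h1 : z a ≤ z (b-1) := hmono a (b-1) (by omega) (by omega)
      have h2 := hzinc (b-1) (by omega)
      have hb : b - 1 + 1 = b := by omega
      rw [hb] at h2
      exact h1.trans_lt h2
    have hxy : HmnEval.xs z m 0 = HmnEval.ys z m 0 := by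
      simp [HmnEval.xs, HmnEval.ys]
    have heq := hid (HmnEval.xs z m) (HmnEval.xs' z m n) (HmnEval.ys z m)
      (HmnEval.ys' z) hxy
    have hL : z m ∈ (Upoly (HmnEval.xs z m) (HmnEval.xs' z m n) m 0 ⊓
        Upoly (HmnEval.ys z m) (HmnEval.ys' z) n 0).1 := by
      rw [CoAux.inf_coe, HmnEval.Ux_eval z m n hz hn 0 (Nat.zero_le m),
        HmnEval.Uy_eval z m n hz hm 0 (Nat.zero_le n)]
      constructor
      · show z m ∈ ({z (m - 0)} : Set P)
        simp
      · show z m ∈ ({z (m + 0)} : Set P)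
        simp
    rw [heq] at hL
    -- but the right-hand side is empty
    have hA : (bigJoin (fun i =>
        if i + 2 ≤ m then
          (Vpoly (HmnEval.xs z m) (HmnEval.xs' z m n) m i 0 ⊓
            Upoly (HmnEval.ys z m) (HmnEval.ys' z) n 0) ⊔
          (Wpoly (HmnEval.xs z m) (HmnEval.xs' z m n) m i 0 ⊓
            Upoly (HmnEval.ys z m) (HmnEval.ys' z) n 0)
        else Vpoly (HmnEval.xs z m) (HmnEval.xs' z m n) m i 0 ⊓
          Upoly (HmnEval.ys z m) (HmnEval.ys' z) n 0) (m - 1)).1 = ∅ := by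
      apply bigJoin_coe_empty
      intro k hk
      by_cases hk2 : k + 2 ≤ m
      · rw [if_pos hk2]
        apply CoAux.sup_empty_empty
        · rw [CoAux.inf_coe, HmnEval.Vx_eval z m n hz hn (by omega) 0 (Nat.zero_le k)]
          exact Set.empty_inter _
        · rw [CoAux.inf_coe, HmnEval.Wx_eval z m n hz hn (by omega) 0 (Nat.zero_le k)]
          exact Set.empty_inter _
      · rw [if_neg hk2, CoAux.inf_coe,
          HmnEval.Vx_eval z m n hz hn (by omega) 0 (Nat.zero_le k)]
        exact Set.empty_inter _
    have hB : (bigJoin (fun j =>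
        if j + 2 ≤ n then
          (Upoly (HmnEval.xs z m) (HmnEval.xs' z m n) m 0 ⊓
            Vpoly (HmnEval.ys z m) (HmnEval.ys' z) n j 0) ⊔
          (Upoly (HmnEval.xs z m) (HmnEval.xs' z m n) m 0 ⊓
            Wpoly (HmnEval.ys z m) (HmnEval.ys' z) n j 0)
        else Upoly (HmnEval.xs z m) (HmnEval.xs' z m n) m 0 ⊓
          Vpoly (HmnEval.ys z m) (HmnEval.ys' z) n j 0) (n - 1)).1 = ∅ := by
      apply bigJoin_coe_empty
      intro k hk
      by_cases hk2 : k + 2 ≤ n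
      · rw [if_pos hk2]
        apply CoAux.sup_empty_empty
        · rw [CoAux.inf_coe, HmnEval.Vy_eval z m n hz hm (by omega) 0 (Nat.zero_le k)]
          exact Set.inter_empty _
        · rw [CoAux.inf_coe, HmnEval.Wy_eval z m n hz hm (by omega) 0 (Nat.zero_le k)]
          exact Set.inter_empty _
      · rw [if_neg hk2, CoAux.inf_coe,
          HmnEval.Vy_eval z m n hz hm (by omega) 0 (Nat.zero_le k)]
        exact Set.inter_empty _
    have hClast : (Upoly (HmnEval.xs z m) (HmnEval.xs' z m n) m 0 ⊓
        Upoly (HmnEval.ys z m) (HmnEval.ys' z) n 0 ⊓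
        (HmnEval.xs z m 1 ⊔ HmnEval.ys' z 1) ⊓
        (HmnEval.xs' z m n 1 ⊔ HmnEval.ys z m 1)).1 = ∅ := by
      apply Set.eq_empty_iff_forall_notMem.2
      intro q hq
      rw [CoAux.inf_coe] at hq
      obtain ⟨hq1, -⟩ := hq
      rw [CoAux.inf_coe] at hq1
      obtain ⟨hq1, hq3⟩ := hq1
      rw [CoAux.inf_coe, HmnEval.Ux_eval z m n hz hn 0 (Nat.zero_le m)] at hq1
      obtain ⟨hq1, -⟩ := hq1
      have hq' : q = z (m - 0) := hq1
      rw [Nat.sub_zero] at hq'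
      subst hq'
      rw [CoAux.sup_coe] at hq3
      obtain ⟨a, -, b, hb, -, h2⟩ := hq3
      rcases hb with hb | hb
      · have hb' : b = z (m - 1) := hb
        rw [hb'] at h2
        exact (hz (m - 1) m (by omega) (by omega)).not_ge h2
      · have hb' : b = z 0 := hb
        rw [hb'] at h2
        exact (hz 0 m (by omega) (by omega)).not_ge h2
    rw [CoAux.sup_coe] at hL
    obtain ⟨a, ha, -, -, -, -⟩ := hL
    rw [CoAux.sup_coe] at ha
    rcases ha with ha | ha
    · rcases ha with ⟨a', ha', -, -, -, -⟩
      rcases ha' with h | h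
      · rw [hA] at h; exact h
      · rw [hB] at h; exact h
    · rw [hClast] at ha
      exact ha
  · -- the length bound implies the identity
    intro hlen x x' y y' hxy
    apply le_antisymm ?_ (Hmn_rhs_le_lhs m n hm hn x x' y y')
    apply CoAux.le_iff.2
    intro p hp
    rw [CoAux.inf_coe] at hp
    obtain ⟨hpx, hpy⟩ := hp
    set A := bigJoin (fun i =>
          if i + 2 ≤ m then
            (Vpoly x x' m i 0 ⊓ Upoly y y' n 0) ⊔ (Wpoly x x' m i 0 ⊓ Upoly y y' n 0)
          else Vpoly x x' m i 0 ⊓ Upoly y y' n 0) (m - 1) with hAdef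
    set B := bigJoin (fun j =>
          if j + 2 ≤ n then
            (Upoly x x' m 0 ⊓ Vpoly y y' n j 0) ⊔ (Upoly x x' m 0 ⊓ Wpoly y y' n j 0)
          else Upoly x x' m 0 ⊓ Vpoly y y' n j 0) (n - 1) with hBdef
    set D := Upoly x x' m 0 ⊓ Upoly y y' n 0 ⊓ (x 1 ⊔ y' 1) ⊓ (x' 1 ⊔ y 1) with hDdef
    have hsubA : A.1 ⊆ (A ⊔ B ⊔ D).1 := CoAux.le_iff.1 (le_sup_left.trans le_sup_left)
    have hsubB : B.1 ⊆ (A ⊔ B ⊔ D).1 := CoAux.le_iff.1 (le_sup_right.trans le_sup_left)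
    have hsubD : D.1 ⊆ (A ⊔ B ⊔ D).1 := CoAux.le_iff.1 le_sup_right
    rcases Upoly_claim x x' m 0 hm p hpx with
      ⟨k, -, hk1, hkV⟩ | ⟨k, -, hk1, hkW⟩ |
      ⟨a, ha0, haU, hadesc, b, hbx, hpb⟩ | ⟨a, ha0, haU, haasc, b, hbx, hbp⟩
    · -- V-case on the x side
      apply hsubA
      rw [hAdef]
      apply CoAux.le_iff.1 (le_bigJoin _ (show k ≤ m - 1 by omega))
      by_cases hk2 : k + 2 ≤ m
      · rw [if_pos hk2]
        apply CoAux.le_iff.1 le_sup_left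
        rw [CoAux.inf_coe]
        exact ⟨hkV, hpy⟩
      · rw [if_neg hk2, CoAux.inf_coe]
        exact ⟨hkV, hpy⟩
    · -- W-case on the x side
      apply hsubA
      rw [hAdef]
      apply CoAux.le_iff.1 (le_bigJoin _ (show k ≤ m - 1 by omega))
      rw [if_pos hk1]
      apply CoAux.le_iff.1 le_sup_right
      rw [CoAux.inf_coe]
      exact ⟨hkW, hpy⟩
    · -- descending chain on the x side
      rcases Upoly_claim y y' n 0 hn p hpy with
        ⟨k, -, hk1, hkV⟩ | ⟨k, -, hk1, hkW⟩ |
        ⟨c, hc0, hcU, hcdesc, d, hdy, hpd⟩ | ⟨c, hc0, hcU, hcasc, d, hdy, hdp⟩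
      · apply hsubB
        rw [hBdef]
        apply CoAux.le_iff.1 (le_bigJoin _ (show k ≤ n - 1 by omega))
        by_cases hk2 : k + 2 ≤ n
        · rw [if_pos hk2]
          apply CoAux.le_iff.1 le_sup_left
          rw [CoAux.inf_coe]
          exact ⟨hpx, hkV⟩
        · rw [if_neg hk2, CoAux.inf_coe]
          exact ⟨hpx, hkV⟩
      · apply hsubB
        rw [hBdef]
        apply CoAux.le_iff.1 (le_bigJoin _ (show k ≤ n - 1 by omega))
        rw [if_pos hk1]
        apply CoAux.le_iff.1 le_sup_right
        rw [CoAux.inf_coe]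
        exact ⟨hpx, hkW⟩
      · -- both chains descend : p belongs to the last term
        apply hsubD
        rw [hDdef, CoAux.inf_coe, CoAux.inf_coe, CoAux.inf_coe]
        have ha1x : a 1 ∈ (x 1).1 :=
          CoAux.le_iff.1 (Upoly_le_x x x' (by omega)) (haU 1 (by omega) (by omega))
        have hc1y : c 1 ∈ (y 1).1 :=
          CoAux.le_iff.1 (Upoly_le_x y y' (by omega)) (hcU 1 (by omega) (by omega))
        have ha1p : a 1 ≤ p := by
          have := hadesc 0 (by omega) (by omega)
          rw [ha0] at this
          exact this.le
        have hc1p : c 1 ≤ p := by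
          have := hcdesc 0 (by omega) (by omega)
          rw [hc0] at this
          exact this.le
        refine ⟨⟨⟨hpx, hpy⟩, ?_⟩, ?_⟩
        · exact CoAux.mem_sup.2 ⟨a 1, Or.inl ha1x, d, Or.inr hdy, ha1p, hpd.le⟩
        · exact CoAux.mem_sup.2 ⟨c 1, Or.inr hc1y, b, Or.inl hbx, hc1p, hpb.le⟩
      · -- x descends, y ascends : a long chain
        exfalso
        have hg : ∀ j, j < m + n →
            (if j ≤ m then a (m - j) else c (j - m)) <
            (if j + 1 ≤ m then a (m - (j+1)) else c (j + 1 - m)) := by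
          intro j hj
          by_cases h1 : j + 1 ≤ m
          · rw [if_pos (by omega : j ≤ m), if_pos h1]
            have := hadesc (m - (j+1)) (Nat.zero_le _) (by omega)
            rwa [show m - (j+1) + 1 = m - j by omega] at this
          · rw [if_neg h1]
            by_cases h2 : j ≤ m
            · have hjm : j = m := by omega
              rw [if_pos h2, hjm, Nat.sub_self, ha0,
                show m + 1 - m = 1 by omega, ← hc0]
              exact hcasc 0 (by omega) (by omega)
            · rw [if_neg h2]
              have := hcasc (j - m) (by omega) (by omega)
              rwa [show j - m + 1 = j + 1 - m by omega] at this
        have := no_long_chain hlen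
          (fun j => if j ≤ m then a (m - j) else c (j - m)) (m + n) hg
        omega
    · -- ascending chain on the x side
      rcases Upoly_claim y y' n 0 hn p hpy with
        ⟨k, -, hk1, hkV⟩ | ⟨k, -, hk1, hkW⟩ |
        ⟨c, hc0, hcU, hcdesc, d, hdy, hpd⟩ | ⟨c, hc0, hcU, hcasc, d, hdy, hdp⟩
      · apply hsubB
        rw [hBdef]
        apply CoAux.le_iff.1 (le_bigJoin _ (show k ≤ n - 1 by omega))
        by_cases hk2 : k + 2 ≤ n
        · rw [if_pos hk2]
          apply CoAux.le_iff.1 le_sup_left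
          rw [CoAux.inf_coe]
          exact ⟨hpx, hkV⟩
        · rw [if_neg hk2, CoAux.inf_coe]
          exact ⟨hpx, hkV⟩
      · apply hsubB
        rw [hBdef]
        apply CoAux.le_iff.1 (le_bigJoin _ (show k ≤ n - 1 by omega))
        rw [if_pos hk1]
        apply CoAux.le_iff.1 le_sup_right
        rw [CoAux.inf_coe]
        exact ⟨hpx, hkW⟩
      · -- x ascends, y descends : a long chain
        exfalso
        have hg : ∀ j, j < m + n →
            (if j ≤ n then c (n - j) else a (j - n)) <
            (if j + 1 ≤ n then c (n - (j+1)) else a (j + 1 - n)) := by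
          intro j hj
          by_cases h1 : j + 1 ≤ n
          · rw [if_pos (by omega : j ≤ n), if_pos h1]
            have := hcdesc (n - (j+1)) (Nat.zero_le _) (by omega)
            rwa [show n - (j+1) + 1 = n - j by omega] at this
          · rw [if_neg h1]
            by_cases h2 : j ≤ n
            · have hjn : j = n := by omega
              rw [if_pos h2, hjn, Nat.sub_self, hc0,
                show n + 1 - n = 1 by omega, ← ha0]
              exact haasc 0 (by omega) (by omega)
            · rw [if_neg h2]
              have := haasc (j - n) (by omega) (by omega)
              rwa [show j - n + 1 = j + 1 - n by omega] at this
        have := no_long_chain hlen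
          (fun j => if j ≤ n then c (n - j) else a (j - n)) (m + n) hg
        omega
      · -- both chains ascend : p belongs to the last term
        apply hsubD
        rw [hDdef, CoAux.inf_coe, CoAux.inf_coe, CoAux.inf_coe]
        have ha1x : a 1 ∈ (x 1).1 :=
          CoAux.le_iff.1 (Upoly_le_x x x' (by omega)) (haU 1 (by omega) (by omega))
        have hc1y : c 1 ∈ (y 1).1 :=
          CoAux.le_iff.1 (Upoly_le_x y y' (by omega)) (hcU 1 (by omega) (by omega))
        have ha1p : p ≤ a 1 := by
          have := haasc 0 (by omega) (by omega)
          rw [ha0] at this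
          exact this.le
        have hc1p : p ≤ c 1 := by
          have := hcasc 0 (by omega) (by omega)
          rw [hc0] at this
          exact this.le
        refine ⟨⟨⟨hpx, hpy⟩, ?_⟩, ?_⟩
        · exact CoAux.mem_sup.2 ⟨d, Or.inr hdy, a 1, Or.inl ha1x, hdp.le, ha1p⟩
        · exact CoAux.mem_sup.2 ⟨b, Or.inl hbx, c 1, Or.inr hc1y, hbp.le, hc1p⟩
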